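/- If H is a subgroup of a finite group G, then the commuting probability of G is at most the commuting probability of H, i.e., Pr(G) ≤ Pr(H). -/

import Mathlib

open Subgroup Finset

private lemma my_card_le_index_mul {G : Type*} [Group G] [Finite G] (H A : Subgroup G) :
    Nat.card A ≤ H.index * Nat.card ↥(A ⊓ H) := by
  have h1 : Nat.card ↥(H.subgroupOf A) * (H.subgroupOf A).index = Nat.card A :=
    Subgroup.card_mul_index _
  have h3 : H.relIndex A ≤ H.index := by
    have := Subgroup.relIndex_le_of_le_right (H := H) (le_top : A ≤ ⊤)
      (by rw [relIndex_top_right]; exact H.index_ne_zero_of_finite)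
    rwa [relIndex_top_right] at this
  have h4 : Nat.card ↥(H.subgroupOf A) = Nat.card ↥(A ⊓ H) := by
    apply Nat.card_eq_of_bijective (fun x => ⟨↑(x : ↥A), ⟨(x : ↥A).2, x.2⟩⟩)
    constructor
    · rintro ⟨⟨a, ha⟩, ha'⟩ ⟨⟨b, hb⟩, hb'⟩ hab
      simpa using congrArg Subtype.val hab
    · rintro ⟨g, hgA, hgH⟩
      exact ⟨⟨⟨g, hgA⟩, hgH⟩, rfl⟩
  calc Nat.card A = Nat.card ↥(H.subgroupOf A) * (H.subgroupOf A).index := h1.symm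
    _ ≤ Nat.card ↥(A ⊓ H) * H.index := by
        rw [h4]; exact Nat.mul_le_mul_left _ h3
    _ = H.index * Nat.card ↥(A ⊓ H) := mul_comm _ _

private lemma my_sigma_card {ι : Type*} [Fintype ι] (β : ι → Type*) [∀ i, Finite (β i)] :
    Nat.card (Σ i, β i) = ∑ i : ι, Nat.card (β i) := by
  classical
  haveI := fun i => Fintype.ofFinite (β i)
  simp [Nat.card_eq_fintype_card]

private def my_commEquiv (G : Type*) [Group G] :
    {p : G × G // Commute p.1 p.2} ≃ Σ x : G, ↥(Subgroup.centralizer {x}) where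
  toFun p := ⟨p.1.1, ⟨p.1.2, mem_centralizer_singleton_iff.mpr p.2.symm.eq⟩⟩
  invFun s := ⟨(s.1, s.2.1), (mem_centralizer_singleton_iff.mp s.2.2).symm⟩
  left_inv p := rfl
  right_inv s := rfl

theorem commProb_le_of_subgroup (G : Type*) [Group G] [Finite G] (H : Subgroup G) :
    commProb G ≤ commProb H := by
  classical
  haveI := Fintype.ofFinite G
  haveI := Fintype.ofFinite ↥H
  have hGcomm : Nat.card {p : G × G // Commute p.1 p.2}
      = ∑ x : G, Nat.card ↥(Subgroup.centralizer {x}) := by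
    rw [Nat.card_congr (my_commEquiv G), my_sigma_card]
  have hHcomm : Nat.card {p : ↥H × ↥H // Commute p.1 p.2}
      = ∑ y : ↥H, Nat.card ↥(Subgroup.centralizer {y}) := by
    rw [Nat.card_congr (my_commEquiv ↥H), my_sigma_card]
  -- identify centralizer in H with intersection
  have hcent : ∀ y : ↥H, Nat.card ↥(Subgroup.centralizer ({(y : G)} : Set G) ⊓ H)
      = Nat.card ↥(Subgroup.centralizer ({y} : Set ↥H)) := by
    intro y
    apply Nat.card_eq_of_bijective
      (fun (z : ↥(Subgroup.centralizer ({(y : G)} : Set G) ⊓ H)) =>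
        (⟨⟨(z : G), (Subgroup.mem_inf.mp z.2).2⟩, by
          have h := mem_centralizer_singleton_iff.mp (Subgroup.mem_inf.mp z.2).1
          exact mem_centralizer_singleton_iff.mpr (Subtype.ext h)⟩ :
        ↥(Subgroup.centralizer ({y} : Set ↥H))))
    constructor
    · rintro ⟨a, ha⟩ ⟨b, hb⟩ hab
      simpa using hab
    · rintro ⟨z, hz⟩
      refine ⟨⟨(z : G), Subgroup.mem_inf.mpr ⟨?_, z.2⟩⟩, rfl⟩
      have h := mem_centralizer_singleton_iff.mp hz
      exact mem_centralizer_singleton_iff.mpr (congrArg Subtype.val h)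
  set N := Nat.card (Σ x : G, ↥(Subgroup.centralizer ({x} : Set G) ⊓ H)) with hN
  -- swap equiv
  have hswap : N = Nat.card (Σ y : ↥H, ↥(Subgroup.centralizer ({(y : G)} : Set G))) := by
    apply Nat.card_congr
    refine ⟨fun s => ⟨⟨(s.2 : G), (Subgroup.mem_inf.mp s.2.2).2⟩,
        ⟨s.1, mem_centralizer_singleton_iff.mpr
          (mem_centralizer_singleton_iff.mp (Subgroup.mem_inf.mp s.2.2).1).symm⟩⟩,
      fun s => ⟨(s.2 : G), ⟨(s.1 : G), Subgroup.mem_inf.mpr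
        ⟨mem_centralizer_singleton_iff.mpr
          (mem_centralizer_singleton_iff.mp s.2.2).symm, s.1.2⟩⟩⟩, ?_, ?_⟩
    · rintro ⟨x, ⟨z, hz⟩⟩; rfl
    · rintro ⟨y, ⟨x, hx⟩⟩; rfl
  have hA : Nat.card {p : G × G // Commute p.1 p.2} ≤ H.index * N := by
    rw [hGcomm, hN, my_sigma_card, Finset.mul_sum]
    exact Finset.sum_le_sum fun x _ => my_card_le_index_mul H _
  have hB : N ≤ H.index * Nat.card {p : ↥H × ↥H // Commute p.1 p.2} := by
    rw [hswap, hHcomm, my_sigma_card, Finset.mul_sum]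
    refine Finset.sum_le_sum fun y _ => ?_
    calc Nat.card ↥(Subgroup.centralizer ({(y : G)} : Set G))
        ≤ H.index * Nat.card ↥(Subgroup.centralizer ({(y : G)} : Set G) ⊓ H) :=
          my_card_le_index_mul H _
      _ = H.index * Nat.card ↥(Subgroup.centralizer ({y} : Set ↥H)) := by rw [hcent y]
  -- combine: k(G) * nG ≤ index^2 * (k(H) * nH)
  have key : Nat.card (ConjClasses G) ≤ H.index * Nat.card (ConjClasses ↥H) := by
    have e1 := card_comm_eq_card_conjClasses_mul_card G
    have e2 := card_comm_eq_card_conjClasses_mul_card ↥H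
    have hchain : Nat.card (ConjClasses G) * Nat.card G
        ≤ H.index * (H.index * (Nat.card (ConjClasses ↥H) * Nat.card ↥H)) := by
      rw [← e1, ← e2]
      exact le_trans hA (Nat.mul_le_mul_left _ hB)
    have hcard : Nat.card G = H.index * Nat.card ↥H := by
      rw [← H.card_mul_index, mul_comm]
    rw [hcard] at hchain
    have hHpos : 0 < H.index * Nat.card ↥H := by
      rw [← hcard]; exact Nat.card_pos
    have : Nat.card (ConjClasses G) * (H.index * Nat.card ↥H)
        ≤ (H.index * Nat.card (ConjClasses ↥H)) * (H.index * Nat.card ↥H) := by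
      calc Nat.card (ConjClasses G) * (H.index * Nat.card ↥H)
          ≤ H.index * (H.index * (Nat.card (ConjClasses ↥H) * Nat.card ↥H)) := hchain
        _ = (H.index * Nat.card (ConjClasses ↥H)) * (H.index * Nat.card ↥H) := by ring
    exact Nat.le_of_mul_le_mul_right this hHpos
  -- conclude with commProb_def'
  rw [commProb_def', commProb_def']
  have hHpos : (0 : ℚ) < Nat.card ↥H := by exact_mod_cast Nat.card_pos
  have hGpos : (0 : ℚ) < Nat.card G := by exact_mod_cast Nat.card_pos
  rw [div_le_div_iff₀ hGpos hHpos]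
  have hcard : (Nat.card G : ℚ) = H.index * Nat.card ↥H := by
    exact_mod_cast congrArg (Nat.cast (R := ℚ)) (by rw [← H.card_mul_index, mul_comm])
  rw [hcard]
  have : (Nat.card (ConjClasses G) : ℚ) ≤ H.index * Nat.card (ConjClasses ↥H) := by
    exact_mod_cast key
  calc (Nat.card (ConjClasses G) : ℚ) * Nat.card ↥H
      ≤ (H.index * Nat.card (ConjClasses ↥H)) * Nat.card ↥H := by
        apply mul_le_mul_of_nonneg_right this hHpos.le
    _ = Nat.card (ConjClasses ↥H) * ((H.index : ℚ) * Nat.card ↥H) := by ring
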